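/- The sequential relation S_m is computational: it is synchronized, and every element s ∈ S_m has at most one coordinate with content · (i.e., |s^{-1}(D)| ≤ 1). -/
import Mathlib


namespace AMPaper

inductive Cnt
  | dot | times | zero | A | B
deriving DecidableEq

inductive Reg
  | A | B
deriving DecidableEq

/-- A Minsky machine instruction for a machine with states `{0,…,N}`:
`inc R j` is `(i,R,j)` and `dec R k j` is `(i,R,k,j)`. -/
inductive Instr (N : ℕ)
  | inc : Reg → Fin (N + 1) → Instr N
  | dec : Reg → Fin (N + 1) → Fin (N + 1) → Instr N

/-- A Minsky machine with states `{0,…,N}` and exactly one instruction per state. -/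
structure Minsky (N : ℕ) where
  instr : Fin (N + 1) → Instr N

/-- Elements of the universe `A(M)`: pairs `⟨i,c⟩` of a state and a content. -/
abbrev El (N : ℕ) := Fin (N + 1) × Cnt

/-- The content corresponding to a register. -/
def regCnt : Reg → Cnt
  | .A => Cnt.A
  | .B => Cnt.B

/-- The helper function `X(⟨i,c⟩) = ⟨i,×⟩`. -/
def Xf {N : ℕ} (x : El N) : El N := (x.1, Cnt.times)

/-- The semilattice meet. -/
def meet {N : ℕ} (x y : El N) : El N :=
  if x = y then x else (min x.1 y.1, Cnt.times)

/-- The order induced by the meet: `x ≤ y` iff `x ∧ y = x`. -/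
def elLe {N : ℕ} (x y : El N) : Prop := meet x y = x

/-- The operation `M(x,y)` of `A(M)`. -/
def Mop {N : ℕ} (m : Minsky N) (x y : El N) : El N :=
  if x.1 = y.1 then
    match m.instr x.1 with
    | .inc R j =>
        if x.2 = Cnt.dot ∧ y.2 = Cnt.zero then (j, regCnt R)
        else if x.2 = Cnt.zero ∧ y.2 = Cnt.dot then (j, Cnt.dot)
        else if x = y ∧ x.2 ≠ Cnt.dot then (j, x.2)
        else (j, Cnt.times)
    | .dec R _ j =>
        if x.2 = Cnt.dot ∧ y.2 = regCnt R then (j, Cnt.zero)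
        else if x.2 = regCnt R ∧ y.2 = Cnt.dot then (j, Cnt.dot)
        else if x = y ∧ x.2 ≠ Cnt.dot then (j, x.2)
        else (j, Cnt.times)
  else Xf y

/-- The operation `M'(x)` of `A(M)`. -/
def M'op {N : ℕ} (m : Minsky N) (x : El N) : El N :=
  match m.instr x.1 with
  | .dec R k _ => if x.2 = regCnt R then (k, Cnt.times) else (k, x.2)
  | .inc _ _ => Xf x

/-- The operation `I(x,y)` of `A(M)`. -/
def Iop {N : ℕ} (x y : El N) : El N :=
  if x.2 = Cnt.dot then ((1 : Fin (N + 1)), Cnt.dot)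
  else if y.2 = Cnt.zero ∨ y.2 = Cnt.A ∨ y.2 = Cnt.B then ((1 : Fin (N + 1)), Cnt.zero)
  else ((1 : Fin (N + 1)), Cnt.times)

/-- The operation `H(x)` of `A(M)`. -/
def Hop {N : ℕ} (x : El N) : El N :=
  if x = ((0 : Fin (N + 1)), Cnt.zero) ∨ x = ((0 : Fin (N + 1)), Cnt.dot)
  then ((0 : Fin (N + 1)), Cnt.zero)
  else ((0 : Fin (N + 1)), Cnt.times)

/-- The operation `N₀(x,y,z)` of `A(M)`. -/
def N0op {N : ℕ} (x y z : El N) : El N :=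
  if x = ((0 : Fin (N + 1)), Cnt.dot) ∧ y.1 = z.1 then y
  else if x = ((0 : Fin (N + 1)), Cnt.zero) ∧ z.2 ≠ Cnt.dot ∧ y.1 = z.1 then z
  else Xf (meet y z)

/-- The operation `S(x,y,z)` of `A(M)`. -/
def Sop {N : ℕ} (x y z : El N) : El N :=
  if x = ((1 : Fin (N + 1)), Cnt.zero) ∧ y.1 = (1 : Fin (N + 1)) ∧ z.1 = (1 : Fin (N + 1)) ∧
      ((y.2 = Cnt.dot ∧ z.2 = Cnt.zero) ∨ (y.2 = Cnt.zero ∧ z.2 = Cnt.dot) ∨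
        (y.2 = Cnt.zero ∧ z.2 = Cnt.zero))
  then ((1 : Fin (N + 1)), Cnt.zero)
  else ((1 : Fin (N + 1)), Cnt.times)

/-- The operation `N·(u,x,y,z)` of `A(M)`. -/
def Ndotop {N : ℕ} (u x y z : El N) : El N :=
  if x = y ∧ x.2 ≠ Cnt.times ∧ x.1 = z.1 then x
  else if u.2 = Cnt.dot ∧ y.2 = Cnt.times ∧ x.1 = y.1 ∧ y.1 = z.1 then x
  else if u.2 = Cnt.dot ∧ x.2 = Cnt.times ∧ x.1 = y.1 ∧ y.1 = z.1 then y
  else if u.2 = Cnt.dot ∧ (z = x ∨ z = y) ∧ x.1 = y.1 ∧ y.1 = z.1 then z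
  else Xf (meet x (meet y z))

/-- The operation `P(u,v,x,y)` of `A(M)`. -/
def Pop {N : ℕ} (u v x y : El N) : El N :=
  if u.1 = v.1 then x else y

/-- A subset `R ⊆ A(M)^ι` is a subpower if it is closed under all nine
fundamental operations of `A(M)` applied coordinatewise. -/
def IsSubpower {N : ℕ} (m : Minsky N) {ι : Type} (R : Set (ι → El N)) : Prop :=
  (∀ a ∈ R, ∀ b ∈ R, (fun i => meet (a i) (b i)) ∈ R) ∧
  (∀ a ∈ R, ∀ b ∈ R, (fun i => Mop m (a i) (b i)) ∈ R) ∧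
  (∀ a ∈ R, (fun i => M'op m (a i)) ∈ R) ∧
  (∀ a ∈ R, ∀ b ∈ R, (fun i => Iop (a i) (b i)) ∈ R) ∧
  (∀ a ∈ R, (fun i => Hop (a i)) ∈ R) ∧
  (∀ a ∈ R, ∀ b ∈ R, ∀ c ∈ R, (fun i => N0op (a i) (b i) (c i)) ∈ R) ∧
  (∀ a ∈ R, ∀ b ∈ R, ∀ c ∈ R, (fun i => Sop (a i) (b i) (c i)) ∈ R) ∧
  (∀ u ∈ R, ∀ a ∈ R, ∀ b ∈ R, ∀ c ∈ R, (fun i => Ndotop (u i) (a i) (b i) (c i)) ∈ R) ∧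
  (∀ u ∈ R, ∀ v ∈ R, ∀ a ∈ R, ∀ b ∈ R, (fun i => Pop (u i) (v i) (a i) (b i)) ∈ R)

/-- A tuple is synchronized if its state is constant across coordinates. -/
def Sync {N : ℕ} {ι : Type} (r : ι → El N) : Prop :=
  ∀ i j : ι, (r i).1 = (r j).1

/-- The subpower of `A(M)^ι` generated by a set `G`. -/
def Sg {N : ℕ} (m : Minsky N) {ι : Type} (G : Set (ι → El N)) : Set (ι → El N) :=
  {x | ∀ R : Set (ι → El N), IsSubpower m R → G ⊆ R → x ∈ R}

/-- The generators `σ_i` of the `m`-th sequential relation. -/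
def sigmaGen (N m : ℕ) (i : Fin m) : Fin m → El N := fun j =>
  if i = j then ((1 : Fin (N + 1)), Cnt.dot) else ((1 : Fin (N + 1)), Cnt.zero)

/-- The `m`-th sequential relation `S_m`, generated by `σ_1,…,σ_m`. -/
def seqRel (N : ℕ) (mm : Minsky N) (m : ℕ) : Set (Fin m → El N) :=
  Sg mm (Set.range (sigmaGen N m))

/-! ### Auxiliary lemmas -/

lemma meet_fst {N : ℕ} (x y : El N) : (meet x y).1 = min x.1 y.1 := by
  unfold meet; split_ifs with h
  · subst h; simp
  · rfl

lemma meet_dot {N : ℕ} {x y : El N} (h : (meet x y).2 = Cnt.dot) :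
    x.2 = Cnt.dot ∧ y.2 = Cnt.dot := by
  unfold meet at h; split_ifs at h with he
  subst he; exact ⟨h, h⟩

/-- The target state of the instruction at state `p`. -/
def nextState {N : ℕ} (m : Minsky N) (p : Fin (N + 1)) : Fin (N + 1) :=
  match m.instr p with
  | .inc _ j => j
  | .dec _ _ j => j

lemma Mop_fst {N : ℕ} (m : Minsky N) (x y : El N) :
    (Mop m x y).1 = if x.1 = y.1 then nextState m x.1 else y.1 := by
  unfold Mop nextState
  cases h : m.instr x.1 <;> simp only [h] <;> split_ifs <;> simp [Xf]

lemma Mop_dot {N : ℕ} (m : Minsky N) {x y : El N} (h : (Mop m x y).2 = Cnt.dot) :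
    y.2 = Cnt.dot := by
  unfold Mop at h
  rcases hi : m.instr x.1 with ⟨R, j⟩ | ⟨R, k, j⟩ <;> simp only [hi] at h <;>
    cases R <;> split_ifs at h <;> simp_all [regCnt, Xf]

/-- The state reached by `M'`. -/
def nextState' {N : ℕ} (m : Minsky N) (p : Fin (N + 1)) : Fin (N + 1) :=
  match m.instr p with
  | .inc _ _ => p
  | .dec _ k _ => k

lemma M'op_fst {N : ℕ} (m : Minsky N) (x : El N) : (M'op m x).1 = nextState' m x.1 := by
  unfold M'op nextState'
  cases h : m.instr x.1 <;> simp only [h]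
  · rfl
  · split_ifs <;> rfl

lemma M'op_dot {N : ℕ} (m : Minsky N) {x : El N} (h : (M'op m x).2 = Cnt.dot) :
    x.2 = Cnt.dot := by
  unfold M'op at h
  rcases hi : m.instr x.1 with ⟨R, j⟩ | ⟨R, k, j⟩ <;> simp only [hi] at h
  · simp [Xf] at h
  · split_ifs at h <;> simp_all

lemma Iop_fst {N : ℕ} (x y : El N) : (Iop x y).1 = 1 := by
  unfold Iop; split_ifs <;> rfl

lemma Iop_dot {N : ℕ} {x y : El N} (h : (Iop x y).2 = Cnt.dot) : x.2 = Cnt.dot := by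
  unfold Iop at h; split_ifs at h <;> simp_all

lemma Hop_fst {N : ℕ} (x : El N) : (Hop x).1 = 0 := by
  unfold Hop; split_ifs <;> rfl

lemma Hop_ne_dot {N : ℕ} (x : El N) : (Hop x).2 ≠ Cnt.dot := by
  unfold Hop; split_ifs <;> simp

lemma N0op_fst {N : ℕ} (x y z : El N) : (N0op x y z).1 = min y.1 z.1 := by
  unfold N0op; split_ifs with h1 h2
  · rw [h1.2]; simp
  · rw [h2.2.2]; simp
  · simp [Xf, meet_fst]

lemma N0op_dot {N : ℕ} {x y z : El N} (h : (N0op x y z).2 = Cnt.dot) :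
    y.2 = Cnt.dot := by
  unfold N0op at h; split_ifs at h with h1 h2
  · exact h
  · exact absurd h h2.2.1
  · simp [Xf] at h

lemma Sop_fst {N : ℕ} (x y z : El N) : (Sop x y z).1 = 1 := by
  unfold Sop; split_ifs <;> rfl

lemma Sop_ne_dot {N : ℕ} (x y z : El N) : (Sop x y z).2 ≠ Cnt.dot := by
  unfold Sop; split_ifs <;> simp

lemma Ndotop_fst {N : ℕ} (u x y z : El N) :
    (Ndotop u x y z).1 = min x.1 (min y.1 z.1) := by
  unfold Ndotop; split_ifs with h1 h2 h3 h4
  · rw [← h1.1, ← h1.2.2]; simp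
  · rw [← h2.2.2.2, ← h2.2.2.1]; simp
  · rw [← h3.2.2.2, ← h3.2.2.1]; simp
  · rw [← h4.2.2.2, ← h4.2.2.1]; simp
  · simp [Xf, meet_fst]

lemma Ndotop_dot {N : ℕ} {u x y z : El N} (h : (Ndotop u x y z).2 = Cnt.dot) :
    (x.2 = Cnt.dot ∧ y.2 = Cnt.dot) ∨ (u.2 = Cnt.dot ∧ (x.2 = Cnt.dot ∨ y.2 = Cnt.dot)) := by
  unfold Ndotop at h; split_ifs at h with h1 h2 h3 h4
  · exact Or.inl ⟨h, h1.1 ▸ h⟩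
  · exact Or.inr ⟨h2.1, Or.inl h⟩
  · exact Or.inr ⟨h3.1, Or.inr h⟩
  · rcases h4.2.1 with hz | hz
    · exact Or.inr ⟨h4.1, Or.inl (hz ▸ h)⟩
    · exact Or.inr ⟨h4.1, Or.inr (hz ▸ h)⟩
  · simp [Xf] at h

/-- The set of computational tuples is a subpower. -/
lemma comp_isSubpower {N : ℕ} (mm : Minsky N) {ι : Type} :
    IsSubpower mm {s : ι → El N | Sync s ∧
      ∀ i j : ι, (s i).2 = Cnt.dot → (s j).2 = Cnt.dot → i = j} := by
  refine ⟨?_, ?_, ?_, ?_, ?_, ?_, ?_, ?_, ?_⟩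
  · -- meet
    intro a ha b hb
    refine ⟨fun i j => by simp only [meet_fst]; rw [ha.1 i j, hb.1 i j], ?_⟩
    intro i j hi hj
    exact ha.2 i j (meet_dot hi).1 (meet_dot hj).1
  · -- Mop
    intro a ha b hb
    refine ⟨fun i j => by simp only [Mop_fst]; rw [ha.1 i j, hb.1 i j], ?_⟩
    intro i j hi hj
    exact hb.2 i j (Mop_dot mm hi) (Mop_dot mm hj)
  · -- M'op
    intro a ha
    refine ⟨fun i j => by simp only [M'op_fst]; rw [ha.1 i j], ?_⟩
    intro i j hi hj
    exact ha.2 i j (M'op_dot mm hi) (M'op_dot mm hj)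
  · -- Iop
    intro a ha b hb
    refine ⟨fun i j => by simp only [Iop_fst], ?_⟩
    intro i j hi hj
    exact ha.2 i j (Iop_dot hi) (Iop_dot hj)
  · -- Hop
    intro a ha
    refine ⟨fun i j => by simp only [Hop_fst], ?_⟩
    intro i j hi hj
    exact absurd hi (Hop_ne_dot _)
  · -- N0op
    intro a ha b hb c hc
    refine ⟨fun i j => by simp only [N0op_fst]; rw [hb.1 i j, hc.1 i j], ?_⟩
    intro i j hi hj
    exact hb.2 i j (N0op_dot hi) (N0op_dot hj)
  · -- Sop
    intro a ha b hb c hc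
    refine ⟨fun i j => by simp only [Sop_fst], ?_⟩
    intro i j hi hj
    exact absurd hi (Sop_ne_dot _ _ _)
  · -- Ndotop
    intro u hu a ha b hb c hc
    refine ⟨fun i j => by
      simp only [Ndotop_fst]; rw [ha.1 i j, hb.1 i j, hc.1 i j], ?_⟩
    intro i j hi hj
    rcases Ndotop_dot hi with ⟨hxi, hyi⟩ | ⟨hui, hxyi⟩ <;>
      rcases Ndotop_dot hj with ⟨hxj, hyj⟩ | ⟨huj, hxyj⟩
    · exact ha.2 i j hxi hxj
    · rcases hxyj with h | h
      · exact ha.2 i j hxi h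
      · exact hb.2 i j hyi h
    · rcases hxyi with h | h
      · exact ha.2 i j h hxj
      · exact hb.2 i j h hyj
    · exact hu.2 i j hui huj
  · -- Pop
    intro u hu v hv a ha b hb
    constructor
    · intro i j
      by_cases h : (u i).1 = (v i).1
      · have h' : (u j).1 = (v j).1 := by rw [← hu.1 i j, ← hv.1 i j]; exact h
        simp only [Pop, if_pos h, if_pos h']; exact ha.1 i j
      · have h' : ¬ (u j).1 = (v j).1 := by rw [← hu.1 i j, ← hv.1 i j]; exact h
        simp only [Pop, if_neg h, if_neg h']; exact hb.1 i j
    · intro i j hi hj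
      by_cases h : (u i).1 = (v i).1
      · have h' : (u j).1 = (v j).1 := by rw [← hu.1 i j, ← hv.1 i j]; exact h
        simp only [Pop, if_pos h] at hi
        simp only [Pop, if_pos h'] at hj
        exact ha.2 i j hi hj
      · have h' : ¬ (u j).1 = (v j).1 := by rw [← hu.1 i j, ← hv.1 i j]; exact h
        simp only [Pop, if_neg h] at hi
        simp only [Pop, if_neg h'] at hj
        exact hb.2 i j hi hj

lemma sigmaGen_mem {N m : ℕ} (k : Fin m) :
    Sync (sigmaGen N m k) ∧
      ∀ i j : Fin m, (sigmaGen N m k i).2 = Cnt.dot → (sigmaGen N m k j).2 = Cnt.dot →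
        i = j := by
  constructor
  · intro i j; simp only [sigmaGen]; split_ifs <;> rfl
  · intro i j hi hj
    simp only [sigmaGen] at hi hj
    split_ifs at hi hj with h1 h2 <;> simp_all

/-- The sequential relation `S_m` is computational: every element is
synchronized and has at most one coordinate with content `·`. -/
theorem seqRel_computational {N : ℕ} (mm : Minsky N) (m : ℕ) :
    ∀ s ∈ seqRel N mm m, Sync s ∧
      ∀ i j : Fin m, (s i).2 = Cnt.dot → (s j).2 = Cnt.dot → i = j := by
  intro s hs
  refine hs {t | Sync t ∧ ∀ i j : Fin m, (t i).2 = Cnt.dot → (t j).2 = Cnt.dot → i = j}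
    (comp_isSubpower mm) ?_
  rintro t ⟨k, rfl⟩
  exact sigmaGen_mem k

end AMPaper
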